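/- For every p ≥ 2 and every n ∈ ℕ, (2n+5)·Ψ(1+(2n+5)/p) + (2n+1)·Ψ(1+(2n+1)/p) − 2(2n+3)·Ψ(1+(2n+3)/p) > 0. -/

import Mathlib

open Real

open Filter Finset
open scoped Topology

lemma summable_base : Summable (fun k : ℕ => 1/((k:ℝ)+1)^2) := by
  have := (summable_nat_add_iff (f := fun n : ℕ => 1/((n:ℝ))^2) 1).mpr
    (summable_one_div_nat_pow.mpr one_lt_two)
  refine this.congr fun k => by push_cast; ring

lemma u_nonneg {y : ℝ} (hy : 0 < y) (k : ℕ) : 0 ≤ 1/((k:ℝ)+1) - 1/(y+k+1) := by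
  have h1 : (0:ℝ) < (k:ℝ)+1 := by positivity
  have h2 : (0:ℝ) < y+k+1 := by positivity
  rw [sub_nonneg]
  gcongr
  linarith

lemma u_le {y : ℝ} (hy : 0 < y) (k : ℕ) :
    1/((k:ℝ)+1) - 1/(y+k+1) ≤ y * (1/((k:ℝ)+1)^2) := by
  have h1 : (0:ℝ) < (k:ℝ)+1 := by positivity
  have h2 : (0:ℝ) < y+k+1 := by positivity
  rw [div_sub_div _ _ h1.ne' h2.ne',
    show y * (1/((k:ℝ)+1)^2) = y/((k+1)^2) by ring,
    div_le_div_iff₀ (by positivity) (by positivity)]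
  nlinarith [mul_nonneg (mul_nonneg hy.le hy.le) h1.le]

lemma summable_u {y : ℝ} (hy : 0 < y) :
    Summable (fun k : ℕ => 1/((k:ℝ)+1) - 1/(y+k+1)) :=
  (summable_base.mul_left y).of_nonneg_of_le (u_nonneg hy) (u_le hy)

set_option maxHeartbeats 1000000 in
lemma digamma_hasDeriv {y : ℝ} (hy : 0 < y) :
    HasDerivAt (fun t => Real.log (Real.Gamma t))
      (-Real.eulerMascheroniConstant + (∑' k : ℕ, (1/((k:ℝ)+1) - 1/(y+k+1))) - 1/y) y := by
  set G : ℝ → ℝ := fun t =>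
    -Real.eulerMascheroniConstant + (∑' k : ℕ, (1/((k:ℝ)+1) - 1/(t+k+1))) - 1/t with hGdef
  set F' : ℕ → ℝ → ℝ := fun n t => Real.log n - ∑ m ∈ Finset.range (n+1), 1/(t+m) with hF'def
  have hso : IsOpen (Set.Ioo (y/2) (y+1)) := isOpen_Ioo
  have hys : y ∈ Set.Ioo (y/2) (y+1) := ⟨by linarith, by linarith⟩
  have hpos : ∀ t ∈ Set.Ioo (y/2) (y+1), 0 < t := fun t ht => lt_trans (by linarith) ht.1
  have main : HasDerivAt (fun t => Real.log (Real.Gamma t)) (G y) y := by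
    refine hasDerivAt_of_tendstoUniformlyOn (l := atTop) hso
      (f := fun n t => Real.BohrMollerup.logGammaSeq t n) (f' := F') (g' := G) ?_ ?_ ?_ hys
    · -- uniform convergence
      rw [Metric.tendstoUniformlyOn_iff]
      intro ε hε
      have h1 : Tendsto (fun n : ℕ =>
          |(harmonic n : ℝ) - Real.log n - Real.eulerMascheroniConstant|) atTop (𝓝 0) := by
        have := Real.tendsto_harmonic_sub_log.sub
          (tendsto_const_nhds (x := Real.eulerMascheroniConstant))
        rw [sub_self] at this
        simpa using this.abs
      have h2 : Tendsto (fun n : ℕ => (y+1) * ∑' k : ℕ, 1/(((k+n:ℕ):ℝ)+1)^2) atTop (𝓝 0) := by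
        have := (tendsto_sum_nat_add (fun j : ℕ => 1/((j:ℝ)+1)^2)).const_mul (y+1)
        simpa using this
      have hC : Tendsto (fun n : ℕ =>
          |(harmonic n : ℝ) - Real.log n - Real.eulerMascheroniConstant|
            + (y+1) * ∑' k : ℕ, 1/(((k+n:ℕ):ℝ)+1)^2) atTop (𝓝 0) := by
        simpa using h1.add h2
      filter_upwards [hC.eventually_lt_const hε] with n hn t ht
      have ht0 : 0 < t := hpos t ht
      have ht1 : t < y + 1 := ht.2
      have hsumt := summable_u ht0
      have hsumsh : Summable (fun k : ℕ => 1/(((k+n:ℕ):ℝ)+1) - 1/(t+(k+n:ℕ)+1)) :=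
        (summable_nat_add_iff n).mpr hsumt
      have hsumb : Summable (fun k : ℕ => (y+1) * (1/(((k+n:ℕ):ℝ)+1)^2)) :=
        ((summable_nat_add_iff (f := fun j : ℕ => 1/((j:ℝ)+1)^2) n).mpr summable_base).mul_left _
      have hsplit : ∑' k : ℕ, (1/((k:ℝ)+1) - 1/(t+k+1))
          = (∑ k ∈ Finset.range n, (1/((k:ℝ)+1) - 1/(t+k+1)))
            + ∑' k : ℕ, (1/(((k+n:ℕ):ℝ)+1) - 1/(t+(k+n:ℕ)+1)) :=
        (Summable.sum_add_tsum_nat_add n hsumt).symm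
      have hrange : ∑ m ∈ Finset.range (n+1), 1/(t+(m:ℝ))
          = (∑ k ∈ Finset.range n, 1/(t+(k:ℝ)+1)) + 1/t := by
        rw [Finset.sum_range_succ']
        push_cast
        simp [add_assoc]
      have hharm : (harmonic n : ℝ) = ∑ k ∈ Finset.range n, 1/((k:ℝ)+1) := by
        rw [harmonic]
        push_cast
        simp [one_div]
      have hs3 : (∑ k ∈ Finset.range n, (1/((k:ℝ)+1) - 1/(t+k+1)))
          + (∑ k ∈ Finset.range n, 1/(t+(k:ℝ)+1)) = ∑ k ∈ Finset.range n, 1/((k:ℝ)+1) := by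
        rw [← Finset.sum_add_distrib]
        apply Finset.sum_congr rfl
        intros
        ring
      have key : G t - F' n t = ((harmonic n : ℝ) - Real.log n - Real.eulerMascheroniConstant)
          + ∑' k : ℕ, (1/(((k+n:ℕ):ℝ)+1) - 1/(t+(k+n:ℕ)+1)) := by
        simp only [hGdef, hF'def]
        rw [hsplit, hrange, hharm] at *
        linarith [hs3]
      have tail_nonneg : 0 ≤ ∑' k : ℕ, (1/(((k+n:ℕ):ℝ)+1) - 1/(t+(k+n:ℕ)+1)) :=
        tsum_nonneg fun k => u_nonneg ht0 (k+n)
      have tail_le : ∑' k : ℕ, (1/(((k+n:ℕ):ℝ)+1) - 1/(t+(k+n:ℕ)+1))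
          ≤ (y+1) * ∑' k : ℕ, 1/(((k+n:ℕ):ℝ)+1)^2 := by
        rw [← tsum_mul_left]
        refine Summable.tsum_le_tsum (fun k => ?_) hsumsh hsumb
        calc 1/(((k+n:ℕ):ℝ)+1) - 1/(t+(k+n:ℕ)+1) ≤ t * (1/(((k+n:ℕ):ℝ)+1)^2) := u_le ht0 (k+n)
          _ ≤ (y+1) * (1/(((k+n:ℕ):ℝ)+1)^2) := by
              apply mul_le_mul_of_nonneg_right ht1.le (by positivity)
      rw [Real.dist_eq, key]
      calc |((harmonic n : ℝ) - Real.log n - Real.eulerMascheroniConstant)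
            + ∑' k : ℕ, (1/(((k+n:ℕ):ℝ)+1) - 1/(t+(k+n:ℕ)+1))|
          ≤ |(harmonic n : ℝ) - Real.log n - Real.eulerMascheroniConstant|
            + |∑' k : ℕ, (1/(((k+n:ℕ):ℝ)+1) - 1/(t+(k+n:ℕ)+1))| := abs_add_le _ _
        _ ≤ |(harmonic n : ℝ) - Real.log n - Real.eulerMascheroniConstant|
            + (y+1) * ∑' k : ℕ, 1/(((k+n:ℕ):ℝ)+1)^2 := by
              rw [abs_of_nonneg tail_nonneg]; linarith
        _ < ε := hn
    · -- derivatives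
      filter_upwards with n
      intro t ht
      have ht0 := hpos t ht
      have h1 : HasDerivAt (fun t : ℝ => t * Real.log n + Real.log (Nat.factorial n)) (Real.log n) t := by
        simpa using ((hasDerivAt_id t).mul_const (Real.log n)).add_const (Real.log (Nat.factorial n))
      have h2 : HasDerivAt (fun t : ℝ => ∑ m ∈ Finset.range (n+1), Real.log (t+m))
          (∑ m ∈ Finset.range (n+1), 1/(t+m)) t := by
        apply HasDerivAt.fun_sum
        intro m _
        have hm : t + (m:ℝ) ≠ 0 := by positivity
        simpa using ((hasDerivAt_id t).add_const (m:ℝ)).log hm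
      have := h1.sub h2
      simp only [Real.BohrMollerup.logGammaSeq]
      exact this
    · intro t ht
      exact Real.BohrMollerup.tendsto_log_gamma (hpos t ht)
  exact main

/-- The Digamma function `Ψ = (ln Γ)'`. -/
noncomputable def digamma (x : ℝ) : ℝ := deriv (fun y => Real.log (Real.Gamma y)) x

lemma digamma_eq {y : ℝ} (hy : 0 < y) :
    digamma y = -Real.eulerMascheroniConstant
      + (∑' k : ℕ, (1/((k:ℝ)+1) - 1/(y+k+1))) - 1/y :=
  (digamma_hasDeriv hy).deriv

lemma key (p t c : ℝ) (hp : 0 < p) (ht : 3 ≤ t) (hc : 0 ≤ c) :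
    0 < 2*t/(1+t/p+c) - (t+2)/(1+(t+2)/p+c) - (t-2)/(1+(t-2)/p+c) := by
  have d1 : 0 < p*(1+c)+t-2 := by nlinarith
  have d2 : 0 < p*(1+c)+t := by nlinarith
  have d3 : 0 < p*(1+c)+t+2 := by nlinarith
  have d1' : (0:ℝ) < p*(1+c)+(t-2) := by linarith
  have e1 : 1+t/p+c = (p*(1+c)+t)/p := by field_simp; ring
  have e2 : 1+(t+2)/p+c = (p*(1+c)+t+2)/p := by field_simp; ring
  have e3 : 1+(t-2)/p+c = (p*(1+c)+(t-2))/p := by field_simp; ring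
  rw [e1, e2, e3, div_div_eq_mul_div, div_div_eq_mul_div, div_div_eq_mul_div]
  have key2 : 2*t*p/(p*(1+c)+t) - (t+2)*p/(p*(1+c)+t+2) - (t-2)*p/(p*(1+c)+(t-2))
      = 8*p*(p*(1+c)) / ((p*(1+c)+t)*((p*(1+c)+t+2)*(p*(1+c)+(t-2)))) := by
    rw [div_sub_div _ _ d2.ne' d3.ne',
      div_sub_div _ _ (mul_pos d2 d3).ne' d1'.ne']
    rw [div_eq_div_iff (mul_pos (mul_pos d2 d3) d1').ne' (mul_pos d2 (mul_pos d3 d1')).ne']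
    ring
  rw [key2]
  exact div_pos (by positivity) (mul_pos d2 (mul_pos d3 d1'))

lemma combo (p t : ℝ) (hp : 0 < p) (ht : 3 ≤ t) :
    0 < (t+2) * digamma (1+(t+2)/p) + (t-2) * digamma (1+(t-2)/p)
      - 2*t*digamma (1+t/p) := by
  have hy2 : (0:ℝ) < 1+(t+2)/p := by
    have : 0 < (t+2)/p := div_pos (by linarith) hp
    linarith
  have hy0 : (0:ℝ) < 1+(t-2)/p := by
    have : 0 < (t-2)/p := div_pos (by linarith) hp
    linarith
  have hy1 : (0:ℝ) < 1+t/p := by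
    have : 0 < t/p := div_pos (by linarith) hp
    linarith
  rw [digamma_eq hy2, digamma_eq hy0, digamma_eq hy1]
  have hs2 := summable_u hy2
  have hs0 := summable_u hy0
  have hs1 := summable_u hy1
  have hcomb : (t+2) * (∑' k : ℕ, (1/((k:ℝ)+1) - 1/(1+(t+2)/p+k+1)))
        + (t-2) * (∑' k : ℕ, (1/((k:ℝ)+1) - 1/(1+(t-2)/p+k+1)))
        - 2*t * (∑' k : ℕ, (1/((k:ℝ)+1) - 1/(1+t/p+k+1)))
      = ∑' k : ℕ, ((t+2) * (1/((k:ℝ)+1) - 1/(1+(t+2)/p+k+1))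
        + (t-2) * (1/((k:ℝ)+1) - 1/(1+(t-2)/p+k+1))
        - 2*t * (1/((k:ℝ)+1) - 1/(1+t/p+k+1))) := by
    rw [← tsum_mul_left, ← tsum_mul_left, ← tsum_mul_left,
      ← Summable.tsum_add (hs2.mul_left _) (hs0.mul_left _),
      ← Summable.tsum_sub ((hs2.mul_left _).add (hs0.mul_left _)) (hs1.mul_left _)]
  have hrw : (t+2) * (-Real.eulerMascheroniConstant
        + (∑' k : ℕ, (1/((k:ℝ)+1) - 1/(1+(t+2)/p+k+1))) - 1/(1+(t+2)/p))
      + (t-2) * (-Real.eulerMascheroniConstant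
        + (∑' k : ℕ, (1/((k:ℝ)+1) - 1/(1+(t-2)/p+k+1))) - 1/(1+(t-2)/p))
      - 2*t * (-Real.eulerMascheroniConstant
        + (∑' k : ℕ, (1/((k:ℝ)+1) - 1/(1+t/p+k+1))) - 1/(1+t/p))
      = (∑' k : ℕ, ((t+2) * (1/((k:ℝ)+1) - 1/(1+(t+2)/p+k+1))
          + (t-2) * (1/((k:ℝ)+1) - 1/(1+(t-2)/p+k+1))
          - 2*t * (1/((k:ℝ)+1) - 1/(1+t/p+k+1))))
        + (2*t/(1+t/p) - (t+2)/(1+(t+2)/p) - (t-2)/(1+(t-2)/p)) := by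
    rw [← hcomb]
    ring
  rw [hrw]
  have hB : 0 < 2*t/(1+t/p) - (t+2)/(1+(t+2)/p) - (t-2)/(1+(t-2)/p) := by
    have := key p t 0 hp ht le_rfl
    simpa using this
  have hW : 0 ≤ ∑' k : ℕ, ((t+2) * (1/((k:ℝ)+1) - 1/(1+(t+2)/p+k+1))
      + (t-2) * (1/((k:ℝ)+1) - 1/(1+(t-2)/p+k+1))
      - 2*t * (1/((k:ℝ)+1) - 1/(1+t/p+k+1))) := by
    refine tsum_nonneg fun k => ?_
    have h := key p t ((k:ℝ)+1) hp ht (by positivity)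
    refine le_of_lt (lt_of_lt_of_eq h ?_)
    ring
  linarith

theorem stmt6 (p : ℝ) (hp : 2 ≤ p) (n : ℕ) :
    0 < (2 * (n : ℝ) + 5) * digamma (1 + (2 * (n : ℝ) + 5) / p)
        + (2 * (n : ℝ) + 1) * digamma (1 + (2 * (n : ℝ) + 1) / p)
        - 2 * (2 * (n : ℝ) + 3) * digamma (1 + (2 * (n : ℝ) + 3) / p) := by
  have hp0 : (0:ℝ) < p := by linarith
  have hn : (0:ℝ) ≤ (n:ℝ) := Nat.cast_nonneg n
  have h := combo p (2*(n:ℝ)+3) hp0 (by linarith)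
  have e1 : 2*(n:ℝ)+3+2 = 2*(n:ℝ)+5 := by ring
  have e2 : 2*(n:ℝ)+3-2 = 2*(n:ℝ)+1 := by ring
  rw [e1, e2] at h
  linarith
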